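/- Let f be continuous on [0,U), thrice differentiable on (0,U), with f(0) = 0 and f''' strictly decreasing on (0,U). Then the function δ ↦ g₁(δ) := 3f(δ)/δ - 2f'(δ) + δf''(δ)/2 is strictly decreasing on (0,U). -/

import Mathlib

open Set Filter Topology

private lemma smono_helper {a b : ℝ} {G G' : ℝ → ℝ}
    (hG : ∀ x ∈ Set.Icc a b, HasDerivAt G (G' x) x)
    (hpos : ∀ x ∈ Set.Ioo a b, 0 < G' x) :
    StrictMonoOn G (Set.Icc a b) := by
  apply strictMonoOn_of_deriv_pos (convex_Icc a b)
  · exact fun x hx => (hG x hx).continuousAt.continuousWithinAt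
  · intro x hx
    rw [interior_Icc] at hx
    rw [(hG x (Set.Ioo_subset_Icc_self hx)).deriv]
    exact hpos x hx

private lemma santi_helper {a b : ℝ} {G G' : ℝ → ℝ}
    (hG : ∀ x ∈ Set.Icc a b, HasDerivAt G (G' x) x)
    (hneg : ∀ x ∈ Set.Ioo a b, G' x < 0) :
    StrictAntiOn G (Set.Icc a b) := by
  apply strictAntiOn_of_deriv_neg (convex_Icc a b)
  · exact fun x hx => (hG x hx).continuousAt.continuousWithinAt
  · intro x hx
    rw [interior_Icc] at hx
    rw [(hG x (Set.Ioo_subset_Icc_self hx)).deriv]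
    exact hneg x hx

private lemma keyA (f f1 f2 f3 : ℝ → ℝ) (U : EReal) (hf0 : f 0 = 0)
    (hcont : ContinuousOn f {w : ℝ | 0 ≤ w ∧ (w : EReal) < U})
    (hd1 : ∀ w : ℝ, 0 < w → (w : EReal) < U → HasDerivAt f (f1 w) w)
    (hd2 : ∀ w : ℝ, 0 < w → (w : EReal) < U → HasDerivAt f1 (f2 w) w)
    (hd3 : ∀ w : ℝ, 0 < w → (w : EReal) < U → HasDerivAt f2 (f3 w) w)
    (hanti : StrictAntiOn f3 {w : ℝ | 0 < w ∧ (w : EReal) < U})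
    (δ : ℝ) (hδ0 : 0 < δ) (hδU : (δ : EReal) < U) :
    δ ^ 3 * f3 δ / 6 ≤ f δ - δ * f1 δ + δ ^ 2 * f2 δ / 2 := by
  have hmem : ∀ x : ℝ, 0 < x → x ≤ δ → 0 < x ∧ (x : EReal) < U := fun x hx hxδ =>
    ⟨hx, lt_of_le_of_lt (EReal.coe_le_coe_iff.mpr hxδ) hδU⟩
  set F : ℝ → ℝ := fun x =>
    f x - f δ - (x - δ) * f1 δ - (x - δ) ^ 2 * f2 δ / 2 - (x - δ) ^ 3 * f3 δ / 6 with hF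
  have hFneg : ∀ ε ∈ Set.Ioo (0 : ℝ) δ, F ε < 0 := by
    intro ε hε
    set F2 : ℝ → ℝ := fun x => f2 x - f2 δ - (x - δ) * f3 δ with hF2def
    set F1 : ℝ → ℝ := fun x =>
      f1 x - f1 δ - (x - δ) * f2 δ - (x - δ) ^ 2 * f3 δ / 2 with hF1def
    have hmemI : ∀ x ∈ Set.Icc ε δ, 0 < x ∧ (x : EReal) < U := fun x hx =>
      hmem x (lt_of_lt_of_le hε.1 hx.1) hx.2
    have hεδ : ε ≤ δ := hε.2.le
    have hδIcc : δ ∈ Set.Icc ε δ := Set.right_mem_Icc.mpr hεδ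
    have hD2 : ∀ x ∈ Set.Icc ε δ, HasDerivAt F2 (f3 x - f3 δ) x := by
      intro x hx
      obtain ⟨hx0, hxU⟩ := hmemI x hx
      have h := ((hd3 x hx0 hxU).sub_const (f2 δ)).sub
        (((hasDerivAt_id' x).sub_const δ).mul_const (f3 δ))
      exact h.congr_deriv (by ring)
    have hD1 : ∀ x ∈ Set.Icc ε δ, HasDerivAt F1 (F2 x) x := by
      intro x hx
      obtain ⟨hx0, hxU⟩ := hmemI x hx
      have h := ((((hd2 x hx0 hxU).sub_const (f1 δ)).sub
        (((hasDerivAt_id' x).sub_const δ).mul_const (f2 δ))).sub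
        (((((hasDerivAt_id' x).sub_const δ).pow 2).mul_const (f3 δ)).div_const 2))
      exact h.congr_deriv (by simp only [hF2def]; ring)
    have hD0 : ∀ x ∈ Set.Icc ε δ, HasDerivAt F (F1 x) x := by
      intro x hx
      obtain ⟨hx0, hxU⟩ := hmemI x hx
      have h := (((((hd1 x hx0 hxU).sub_const (f δ)).sub
        (((hasDerivAt_id' x).sub_const δ).mul_const (f1 δ))).sub
        (((((hasDerivAt_id' x).sub_const δ).pow 2).mul_const (f2 δ)).div_const 2)).sub
        (((((hasDerivAt_id' x).sub_const δ).pow 3).mul_const (f3 δ)).div_const 6))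
      exact h.congr_deriv (by simp only [hF1def]; ring)
    have hF2mono : StrictMonoOn F2 (Set.Icc ε δ) := by
      apply smono_helper hD2
      intro x hx
      have hxS := hmemI x (Set.Ioo_subset_Icc_self hx)
      exact sub_pos.mpr (hanti hxS ⟨hδ0, hδU⟩ hx.2)
    have hF2δ : F2 δ = 0 := by simp [hF2def]
    have hF2neg : ∀ x ∈ Set.Ioo ε δ, F2 x < 0 := by
      intro x hx
      have := hF2mono (Set.Ioo_subset_Icc_self hx) hδIcc hx.2
      rwa [hF2δ] at this
    have hF1anti : StrictAntiOn F1 (Set.Icc ε δ) := santi_helper hD1 hF2neg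
    have hF1δ : F1 δ = 0 := by simp [hF1def]
    have hF1pos : ∀ x ∈ Set.Ioo ε δ, 0 < F1 x := by
      intro x hx
      have := hF1anti (Set.Ioo_subset_Icc_self hx) hδIcc hx.2
      rwa [hF1δ] at this
    have hFmono : StrictMonoOn F (Set.Icc ε δ) := smono_helper hD0 hF1pos
    have hFδ : F δ = 0 := by simp [hF]
    have := hFmono (Set.left_mem_Icc.mpr hεδ) hδIcc hε.2
    rwa [hFδ] at this
  -- limit as ε → 0⁺
  have hcw : ContinuousWithinAt F (Set.Ioo 0 δ) 0 := by
    have hsub : Set.Ioo (0 : ℝ) δ ⊆ {w : ℝ | 0 ≤ w ∧ (w : EReal) < U} :=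
      fun x hx => ⟨hx.1.le, (hmem x hx.1 hx.2.le).2⟩
    have h0mem : (0 : ℝ) ∈ {w : ℝ | 0 ≤ w ∧ (w : EReal) < U} :=
      ⟨le_rfl, lt_trans (EReal.coe_lt_coe_iff.mpr hδ0) hδU⟩
    have hcf : ContinuousWithinAt f (Set.Ioo 0 δ) 0 := (hcont 0 h0mem).mono hsub
    have hpoly : Continuous fun x : ℝ =>
        f δ + (x - δ) * f1 δ + (x - δ) ^ 2 * f2 δ / 2 + (x - δ) ^ 3 * f3 δ / 6 := by
      fun_prop
    have : ContinuousWithinAt (fun x => f x - (f δ + (x - δ) * f1 δ + (x - δ) ^ 2 * f2 δ / 2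
        + (x - δ) ^ 3 * f3 δ / 6)) (Set.Ioo 0 δ) 0 := hcf.sub hpoly.continuousWithinAt
    have heq : F = fun x => f x - (f δ + (x - δ) * f1 δ + (x - δ) ^ 2 * f2 δ / 2
        + (x - δ) ^ 3 * f3 δ / 6) := by
      funext x
      simp only [hF]
      ring
    rwa [heq]
  haveI hnb : (nhdsWithin (0 : ℝ) (Set.Ioo 0 δ)).NeBot := by
    apply mem_closure_iff_nhdsWithin_neBot.mp
    rw [closure_Ioo hδ0.ne]
    exact Set.left_mem_Icc.mpr hδ0.le
  have hF0 : F 0 ≤ 0 :=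
    le_of_tendsto hcw (eventually_nhdsWithin_of_forall fun x hx => (hFneg x hx).le)
  have hF0' : f 0 - f δ - (0 - δ) * f1 δ - (0 - δ) ^ 2 * f2 δ / 2
      - (0 - δ) ^ 3 * f3 δ / 6 ≤ 0 := hF0
  rw [hf0] at hF0'
  nlinarith [hF0']

private lemma keyB (f f1 f2 f3 : ℝ → ℝ) (U : EReal) (hf0 : f 0 = 0)
    (hcont : ContinuousOn f {w : ℝ | 0 ≤ w ∧ (w : EReal) < U})
    (hd1 : ∀ w : ℝ, 0 < w → (w : EReal) < U → HasDerivAt f (f1 w) w)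
    (hd2 : ∀ w : ℝ, 0 < w → (w : EReal) < U → HasDerivAt f1 (f2 w) w)
    (hd3 : ∀ w : ℝ, 0 < w → (w : EReal) < U → HasDerivAt f2 (f3 w) w)
    (hanti : StrictAntiOn f3 {w : ℝ | 0 < w ∧ (w : EReal) < U})
    (δ : ℝ) (hδ0 : 0 < δ) (hδU : (δ : EReal) < U) :
    δ ^ 3 * f3 δ / 6 < f δ - δ * f1 δ + δ ^ 2 * f2 δ / 2 := by
  set m : ℝ := δ / 2 with hm
  have hm0 : 0 < m := by positivity
  have hmδ : m < δ := by simp [hm]; linarith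
  have hmem : ∀ x : ℝ, 0 < x → x ≤ δ → 0 < x ∧ (x : EReal) < U := fun x hx hxδ =>
    ⟨hx, lt_of_le_of_lt (EReal.coe_le_coe_iff.mpr hxδ) hδU⟩
  have hmU : (m : EReal) < U := (hmem m hm0 hmδ.le).2
  have hA := keyA f f1 f2 f3 U hf0 hcont hd1 hd2 hd3 hanti m hm0 hmU
  set ψ : ℝ → ℝ := fun x => f x - x * f1 x + x ^ 2 * f2 x / 2 - x ^ 3 * f3 δ / 6 with hψ
  have hDψ : ∀ x ∈ Set.Icc m δ, HasDerivAt ψ (x ^ 2 * (f3 x - f3 δ) / 2) x := by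
    intro x hx
    obtain ⟨hx0, hxU⟩ := hmem x (lt_of_lt_of_le hm0 hx.1) hx.2
    have h := (((hd1 x hx0 hxU).sub ((hasDerivAt_id' x).mul (hd2 x hx0 hxU))).add
      ((((hasDerivAt_id' x).pow 2).mul (hd3 x hx0 hxU)).div_const 2)).sub
      ((((hasDerivAt_id' x).pow 3).mul_const (f3 δ)).div_const 6)
    exact h.congr_deriv (by simp only [Pi.pow_apply]; ring)
  have hψmono : StrictMonoOn ψ (Set.Icc m δ) := by
    apply smono_helper hDψ
    intro x hx
    have hxS := hmem x (lt_of_lt_of_le hm0 hx.1.le) hx.2.le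
    have h3 : f3 δ < f3 x := hanti hxS ⟨hδ0, hδU⟩ hx.2
    have : 0 < x ^ 2 := pow_pos hxS.1 2
    nlinarith
  have hψm : ψ m < ψ δ :=
    hψmono (Set.left_mem_Icc.mpr hmδ.le) (Set.right_mem_Icc.mpr hmδ.le) hmδ
  have h3m : f3 δ < f3 m := hanti ⟨hm0, hmU⟩ ⟨hδ0, hδU⟩ hmδ
  have hψmval : ψ m = f m - m * f1 m + m ^ 2 * f2 m / 2 - m ^ 3 * f3 δ / 6 := rfl
  have hψδval : ψ δ = f δ - δ * f1 δ + δ ^ 2 * f2 δ / 2 - δ ^ 3 * f3 δ / 6 := rfl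
  have hm3 : 0 < m ^ 3 := by positivity
  rw [hψmval, hψδval] at hψm
  nlinarith [hψm, hA, mul_pos hm3 (sub_pos.mpr h3m)]

theorem stmt_8 (f : ℝ → ℝ) (U : EReal) (hU : 0 < U) (hf0 : f 0 = 0)
    (hcont : ContinuousOn f {w : ℝ | 0 ≤ w ∧ (w : EReal) < U})
    (hdiff : ∀ w : ℝ, 0 < w → (w : EReal) < U → DifferentiableAt ℝ f w ∧
      DifferentiableAt ℝ (deriv f) w ∧ DifferentiableAt ℝ (deriv (deriv f)) w)
    (hanti : StrictAntiOn (deriv (deriv (deriv f))) {w : ℝ | 0 < w ∧ (w : EReal) < U}) :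
    StrictAntiOn (fun δ : ℝ => 3 * f δ / δ - 2 * deriv f δ + δ * deriv (deriv f) δ / 2)
      {δ : ℝ | 0 < δ ∧ (δ : EReal) < U} := by
  set S := {δ : ℝ | 0 < δ ∧ (δ : EReal) < U} with hS
  have hd1 : ∀ w : ℝ, 0 < w → (w : EReal) < U → HasDerivAt f (deriv f w) w :=
    fun w h1 h2 => (hdiff w h1 h2).1.hasDerivAt
  have hd2 : ∀ w : ℝ, 0 < w → (w : EReal) < U → HasDerivAt (deriv f) (deriv (deriv f) w) w :=
    fun w h1 h2 => (hdiff w h1 h2).2.1.hasDerivAt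
  have hd3 : ∀ w : ℝ, 0 < w → (w : EReal) < U →
      HasDerivAt (deriv (deriv f)) (deriv (deriv (deriv f)) w) w :=
    fun w h1 h2 => (hdiff w h1 h2).2.2.hasDerivAt
  have hSopen : IsOpen S := by
    have : S = Set.Ioi 0 ∩ (fun x : ℝ => (x : EReal)) ⁻¹' Set.Iio U := by
      ext x; simp [hS, Set.mem_Ioi, Set.mem_Iio]
    rw [this]
    exact isOpen_Ioi.inter (isOpen_Iio.preimage continuous_coe_real_ereal)
  have hconv : Convex ℝ S := by
    rw [convex_iff_ordConnected]
    constructor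
    intro x hx y hy z hz
    exact ⟨lt_of_lt_of_le hx.1 hz.1,
      lt_of_le_of_lt (EReal.coe_le_coe_iff.mpr hz.2) hy.2⟩
  have hg : ∀ δ ∈ S, HasDerivAt
      (fun δ : ℝ => 3 * f δ / δ - 2 * deriv f δ + δ * deriv (deriv f) δ / 2)
      ((3 * deriv f δ * δ - 3 * f δ * 1) / δ ^ 2 - 2 * deriv (deriv f) δ
        + (1 * deriv (deriv f) δ + δ * deriv (deriv (deriv f)) δ) / 2) δ := by
    intro δ hδ
    obtain ⟨hδ0, hδU⟩ := hδ
    have part1 : HasDerivAt (fun x : ℝ => 3 * f x / x)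
        ((3 * deriv f δ * δ - 3 * f δ * 1) / δ ^ 2) δ :=
      ((hd1 δ hδ0 hδU).const_mul 3).div (hasDerivAt_id' δ) hδ0.ne'
    have part2 : HasDerivAt (fun x : ℝ => 2 * deriv f x) (2 * deriv (deriv f) δ) δ :=
      (hd2 δ hδ0 hδU).const_mul 2
    have part3 : HasDerivAt (fun x : ℝ => x * deriv (deriv f) x / 2)
        ((1 * deriv (deriv f) δ + δ * deriv (deriv (deriv f)) δ) / 2) δ :=
      ((hasDerivAt_id' δ).mul (hd3 δ hδ0 hδU)).div_const 2
    exact (part1.sub part2).add part3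
  apply strictAntiOn_of_deriv_neg hconv
  · exact fun δ hδ => (hg δ hδ).differentiableAt.continuousAt.continuousWithinAt
  · intro δ hδ
    rw [hSopen.interior_eq] at hδ
    obtain ⟨hδ0, hδU⟩ := hδ
    rw [(hg δ ⟨hδ0, hδU⟩).deriv]
    have hkey := keyB f (deriv f) (deriv (deriv f)) (deriv (deriv (deriv f))) U hf0 hcont
      hd1 hd2 hd3 hanti δ hδ0 hδU
    have hδ2 : (0 : ℝ) < δ ^ 2 := by positivity
    have h1 : (3 * deriv f δ * δ - 3 * f δ * 1) / δ ^ 2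
        < 3 / 2 * deriv (deriv f) δ - δ * deriv (deriv (deriv f)) δ / 2 := by
      rw [div_lt_iff₀ hδ2]
      nlinarith
    linarith
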